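/- Let (x_i, v_i)_{i=1}^N be a C¹ solution on [0,∞) of the flocking system with friction: x_i'(t) = v_i(t) and v_i'(t) = α_i(t)(v̄_i(t) − v_i(t)) − c_i ‖v_i(t)‖^r v_i(t), where v̄_i(t) = Σ_j a_{ij}(t) v_j(t), the a_{ij}(t) are nonnegative with Σ_j a_{ij}(t) = 1, α_i(t) ≥ 0, c_i > 0 and r ≥ 0. Then for each i, lim_{t→∞} v_i(t) = 0. -/

import Mathlib

open MeasureTheory Set Filter

private lemma left_slope_nonneg_aux {f : ℝ → ℝ} {f' T : ℝ} (hT : 0 < T)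
    (hd : HasDerivWithinAt f f' (Ici 0) T)
    (hle : ∀ s ∈ Ico (0:ℝ) T, f s ≤ f T) : 0 ≤ f' := by
  have hmem : T ∈ closure (Ico (0:ℝ) T) := by
    rw [closure_Ico hT.ne]
    exact ⟨hT.le, le_refl T⟩
  have hne : (nhdsWithin T (Ico (0:ℝ) T)).NeBot := mem_closure_iff_nhdsWithin_neBot.mp hmem
  have h1 : Tendsto (slope f T) (nhdsWithin T (Ico (0:ℝ) T)) (nhds f') := by
    refine (hasDerivWithinAt_iff_tendsto_slope.mp hd).mono_left (nhdsWithin_mono _ ?_)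
    intro s hs
    exact ⟨hs.1, hs.2.ne⟩
  refine ge_of_tendsto h1 ?_
  filter_upwards [self_mem_nhdsWithin] with s hs
  have h2 : f s - f T ≤ 0 := sub_nonpos.mpr (hle s hs)
  have h3 : s - T ≤ 0 := (sub_neg.mpr hs.2).le
  rw [slope_def_field, div_nonneg_iff]
  right
  exact ⟨h2, h3⟩

/-- For a `C¹` solution of the flocking system with friction
`v_i' = α_i(t)(v̄_i - v_i) - c_i ‖v_i‖^r v_i` (with `c_i > 0`, `r ≥ 0`), each velocity tends
to zero as `t → ∞`. -/
theorem friction_forces_velocities_to_zero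
    (N d : ℕ) (hN : 1 ≤ N)
    (x v : Fin N → ℝ → EuclideanSpace ℝ (Fin d))
    (a : Fin N → Fin N → ℝ → ℝ) (α : Fin N → ℝ → ℝ)
    (c : Fin N → ℝ) (r : ℝ) (hr : 0 ≤ r) (hc : ∀ i, 0 < c i)
    (ha_cont : ∀ i j, ContinuousOn (a i j) (Ici 0))
    (ha_nonneg : ∀ i j, ∀ t ∈ Ici (0:ℝ), 0 ≤ a i j t)
    (ha_sum : ∀ i, ∀ t ∈ Ici (0:ℝ), ∑ j, a i j t = 1)
    (hα_cont : ∀ i, ContinuousOn (α i) (Ici 0))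
    (hα_nonneg : ∀ i, ∀ t ∈ Ici (0:ℝ), 0 ≤ α i t)
    (hx : ∀ i, ∀ t ∈ Ici (0:ℝ), HasDerivWithinAt (x i) (v i t) (Ici 0) t)
    (hv : ∀ i, ∀ t ∈ Ici (0:ℝ),
      HasDerivWithinAt (v i)
        (α i t • ((∑ j, a i j t • v j t) - v i t) - (c i * ‖v i t‖ ^ r) • v i t) (Ici 0) t) :
    ∀ i, Tendsto (fun t => v i t) atTop (nhds 0) := by
  haveI hNe : Nonempty (Fin N) := ⟨⟨0, hN⟩⟩
  -- constants (introduced as opaque fvars with defining equations)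
  obtain ⟨c₀, hc₀def⟩ : ∃ c₀ : ℝ, c₀ = Finset.univ.inf' Finset.univ_nonempty c := ⟨_, rfl⟩
  have hc₀pos : 0 < c₀ := by
    rw [hc₀def]
    exact (Finset.lt_inf'_iff _).mpr (fun i _ => hc i)
  have hc₀le : ∀ i, c₀ ≤ c i := by
    intro i
    rw [hc₀def]
    exact Finset.inf'_le c (Finset.mem_univ i)
  obtain ⟨M, hMdef⟩ : ∃ M : ℝ,
      M = Finset.univ.sup' Finset.univ_nonempty (fun i => ‖v i 0‖) := ⟨_, rfl⟩
  have hMle : ∀ i, ‖v i 0‖ ≤ M := by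
    intro i
    rw [hMdef]
    exact Finset.le_sup' (fun j => ‖v j 0‖) (Finset.mem_univ i)
  have hM0 : 0 ≤ M := le_trans (norm_nonneg (v ⟨0, hN⟩ 0)) (hMle ⟨0, hN⟩)
  obtain ⟨A, hAdef⟩ : ∃ A : ℝ, A = M + 1 := ⟨_, rfl⟩
  have hA1 : 1 ≤ A := by rw [hAdef]; linarith
  have hApos : 0 < A := lt_of_lt_of_le one_pos hA1
  have hArpos : 0 < A ^ r := Real.rpow_pos_of_pos hApos r
  obtain ⟨β, hβdef⟩ : ∃ β : ℝ, β = min (c₀ / 2 * A ^ r) (1 / (r + 1)) := ⟨_, rfl⟩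
  have hβpos : 0 < β := by
    rw [hβdef]
    apply lt_min
    · apply mul_pos (by linarith) hArpos
    · apply div_pos one_pos (by linarith)
  have hβr : β * r < 1 := by
    have h1 : β ≤ 1 / (r + 1) := hβdef ▸ min_le_right _ _
    have h2 : β * r ≤ 1 / (r + 1) * r := mul_le_mul_of_nonneg_right h1 hr
    have h3 : 1 / (r + 1) * r < 1 := by
      rw [div_mul_eq_mul_div, div_lt_one (by linarith)]
      linarith
    linarith
  have hβle : β ≤ c₀ / 2 * A ^ r := hβdef ▸ min_le_left _ _
  -- the barrier function
  obtain ⟨u, hudef⟩ : ∃ u : ℝ → ℝ, u = fun t => A * (1 + t) ^ (-β) := ⟨_, rfl⟩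
  have hupos : ∀ t ∈ Ici (0:ℝ), 0 < u t := by
    intro t ht
    have h1t : (0:ℝ) < 1 + t := by simp only [mem_Ici] at ht; linarith
    rw [hudef]
    exact mul_pos hApos (Real.rpow_pos_of_pos h1t _)
  have hu0 : u 0 = A := by simp [hudef]
  have hu' : ∀ t ∈ Ici (0:ℝ),
      HasDerivWithinAt u (A * (-β * (1 + t) ^ (-β - 1))) (Ici 0) t := by
    intro t ht
    have h1t : (0:ℝ) < 1 + t := by simp only [mem_Ici] at ht; linarith
    have h1 : HasDerivAt (fun s : ℝ => 1 + s) 1 t := by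
      simpa using (hasDerivAt_id t).const_add (1:ℝ)
    have h2 : HasDerivAt (fun y : ℝ => y ^ (-β)) (-β * (1 + t) ^ (-β - 1)) (1 + t) :=
      Real.hasDerivAt_rpow_const (Or.inl h1t.ne')
    have h3 : HasDerivAt (fun s : ℝ => (1 + s) ^ (-β)) (-β * (1 + t) ^ (-β - 1)) t := by
      exact (h2.comp t h1).congr_deriv (by ring)
    rw [hudef]
    exact ((h3.const_mul A).hasDerivWithinAt)
  have hucont : ContinuousOn u (Ici 0) := fun t ht => ((hu' t ht).continuousWithinAt)
  have hvcont : ∀ i, ContinuousOn (v i) (Ici 0) := fun i t ht => (hv i t ht).continuousWithinAt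
  -- the key barrier estimate
  have key : ∀ t ∈ Ici (0:ℝ), ∀ i, ‖v i t‖ < u t := by
    by_contra hcon
    push_neg at hcon
    obtain ⟨t₁, ht₁, i₁, hi₁⟩ := hcon
    obtain ⟨S, hSdef⟩ : ∃ S : Set ℝ, S = {t | 0 ≤ t ∧ ∃ i, u t ≤ ‖v i t‖} := ⟨_, rfl⟩
    have hSne : S.Nonempty := ⟨t₁, by rw [hSdef]; exact ⟨ht₁, i₁, hi₁⟩⟩
    have hSbdd : BddBelow S := ⟨0, fun s hs => by rw [hSdef] at hs; exact hs.1⟩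
    have hScl : IsClosed S := by
      have : S = ⋃ i, (Ici 0 ∩ (fun t => ‖v i t‖ - u t) ⁻¹' (Ici 0)) := by
        rw [hSdef]
        ext t
        simp only [mem_setOf_eq, mem_iUnion, mem_inter_iff, mem_Ici, mem_preimage,
          sub_nonneg]
        constructor
        · rintro ⟨h1, i, h2⟩; exact ⟨i, h1, h2⟩
        · rintro ⟨i, h1, h2⟩; exact ⟨h1, i, h2⟩
      rw [this]
      apply isClosed_iUnion_of_finite
      intro i
      exact ContinuousOn.preimage_isClosed_of_isClosed
        (((hvcont i).norm).sub hucont) isClosed_Ici isClosed_Ici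
    obtain ⟨T, hTdef⟩ : ∃ T : ℝ, T = sInf S := ⟨_, rfl⟩
    have hTS : T ∈ S := hTdef ▸ hScl.csInf_mem hSne hSbdd
    rw [hSdef] at hTS
    have hT0 : 0 ≤ T := hTS.1
    have hTpos : 0 < T := by
      rcases lt_or_eq_of_le hT0 with h | h
      · exact h
      · exfalso
        obtain ⟨i, hi⟩ := hTS.2
        rw [← h, hu0] at hi
        have h20 := hMle i
        rw [hAdef] at hi
        linarith
    have hbefore : ∀ s, 0 ≤ s → s < T → ∀ j, ‖v j s‖ < u s := by
      intro s hs hsT j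
      by_contra hcon2
      push_neg at hcon2
      have hmem : s ∈ S := by rw [hSdef]; exact ⟨hs, j, hcon2⟩
      have := csInf_le hSbdd hmem
      rw [← hTdef] at this
      exact absurd this (not_le.mpr hsT)
    have hmemT : T ∈ Ici (0:ℝ) := hT0
    -- at T every velocity is ≤ u T
    have hatT : ∀ j, ‖v j T‖ ≤ u T := by
      intro j
      have hmemc : T ∈ closure (Ico (0:ℝ) T) := by
        rw [closure_Ico hTpos.ne]
        exact ⟨hT0, le_refl T⟩
      haveI hneb : (nhdsWithin T (Ico (0:ℝ) T)).NeBot :=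
        mem_closure_iff_nhdsWithin_neBot.mp hmemc
      have hcw : Tendsto (fun s => u s - ‖v j s‖) (nhdsWithin T (Ico (0:ℝ) T))
          (nhds (u T - ‖v j T‖)) := by
        have := ((hucont.sub ((hvcont j).norm)) T hmemT)
        exact this.mono_left (nhdsWithin_mono _ (fun s hs => hs.1))
      have : 0 ≤ u T - ‖v j T‖ := by
        refine ge_of_tendsto hcw ?_
        filter_upwards [self_mem_nhdsWithin] with s hs
        exact (sub_nonneg.mpr (hbefore s hs.1 hs.2 j).le)
      linarith only [this]
    obtain ⟨i, hiT⟩ := hTS.2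
    have hEq : ‖v i T‖ = u T := le_antisymm (hatT i) hiT
    -- derivative of φ = ⟪v i, v i⟫ - u * u at T
    set w : EuclideanSpace ℝ (Fin d) :=
      α i T • ((∑ j, a i j T • v j T) - v i T) - (c i * ‖v i T‖ ^ r) • v i T with hwdef
    have hψ : HasDerivWithinAt (fun t => (inner ℝ (v i t) (v i t) : ℝ))
        ((inner ℝ (v i T) w : ℝ) + (inner ℝ w (v i T) : ℝ)) (Ici 0) T :=
      (hv i T hmemT).inner ℝ (hv i T hmemT)
    have hu2 : HasDerivWithinAt (fun t => u t * u t)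
        ((A * (-β * (1 + T) ^ (-β - 1))) * u T + u T * (A * (-β * (1 + T) ^ (-β - 1))))
        (Ici 0) T := (hu' T hmemT).mul (hu' T hmemT)
    have hφ : HasDerivWithinAt (fun t => (inner ℝ (v i t) (v i t) : ℝ) - u t * u t)
        (((inner ℝ (v i T) w : ℝ) + (inner ℝ w (v i T) : ℝ)) -
          ((A * (-β * (1 + T) ^ (-β - 1))) * u T + u T * (A * (-β * (1 + T) ^ (-β - 1)))))
        (Ici 0) T := hψ.sub hu2
    have hDnn : 0 ≤ ((inner ℝ (v i T) w : ℝ) + (inner ℝ w (v i T) : ℝ)) -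
        ((A * (-β * (1 + T) ^ (-β - 1))) * u T + u T * (A * (-β * (1 + T) ^ (-β - 1)))) := by
      apply left_slope_nonneg_aux hTpos hφ
      intro s hs
      have h1 : ‖v i s‖ < u s := hbefore s hs.1 hs.2 i
      have h2 : (inner ℝ (v i s) (v i s) : ℝ) = ‖v i s‖ ^ 2 := real_inner_self_eq_norm_sq _
      have h3 : (inner ℝ (v i T) (v i T) : ℝ) = ‖v i T‖ ^ 2 := real_inner_self_eq_norm_sq _
      have h4 : ‖v i s‖ ^ 2 < (u s) ^ 2 := by
        apply pow_lt_pow_left₀ h1 (norm_nonneg _)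
        norm_num
      rw [h2, h3, hEq]
      linarith only [h4]
    -- now show the derivative is negative, a contradiction
    have hs₁ : (1:ℝ) ≤ 1 + T := by linarith
    have hs₁pos : (0:ℝ) < 1 + T := by linarith
    obtain ⟨P, hPdef⟩ : ∃ P : ℝ, P = (1 + T) ^ (-β) := ⟨_, rfl⟩
    have hPpos : 0 < P := hPdef ▸ Real.rpow_pos_of_pos hs₁pos _
    have huT : u T = A * P := by rw [hudef, hPdef]
    -- inner product bounds
    have hsum_bound : (inner ℝ ((∑ j, a i j T • v j T)) (v i T) : ℝ) ≤ u T * u T := by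
      rw [sum_inner]
      have hstep : ∀ j ∈ Finset.univ, (inner ℝ (a i j T • v j T) (v i T) : ℝ)
          ≤ a i j T * (u T * u T) := by
        intro j _
        rw [real_inner_smul_left]
        apply mul_le_mul_of_nonneg_left _ (ha_nonneg i j T hmemT)
        calc (inner ℝ (v j T) (v i T) : ℝ) ≤ ‖v j T‖ * ‖v i T‖ := real_inner_le_norm _ _
          _ ≤ u T * u T := by
              apply mul_le_mul (hatT j) (hatT i) (norm_nonneg _) (hupos T hmemT).le
      calc (∑ j, (inner ℝ (a i j T • v j T) (v i T) : ℝ))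
          ≤ ∑ j, a i j T * (u T * u T) := Finset.sum_le_sum hstep
        _ = (∑ j, a i j T) * (u T * u T) := by rw [Finset.sum_mul]
        _ = u T * u T := by rw [ha_sum i T hmemT, one_mul]
    have hvv : (inner ℝ (v i T) (v i T) : ℝ) = u T * u T := by
      rw [real_inner_self_eq_norm_sq, hEq]; ring
    have hwv : (inner ℝ w (v i T) : ℝ) ≤ - (c i * (u T) ^ r * (u T * u T)) := by
      rw [hwdef, inner_sub_left, real_inner_smul_left, real_inner_smul_left,
        inner_sub_left, hvv, hEq]
      have h5 : (inner ℝ ((∑ j, a i j T • v j T)) (v i T) : ℝ) - u T * u T ≤ 0 := by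
        linarith only [hsum_bound]
      have h6 : α i T * ((inner ℝ ((∑ j, a i j T • v j T)) (v i T) : ℝ) - u T * u T) ≤ 0 :=
        mul_nonpos_of_nonneg_of_nonpos (hα_nonneg i T hmemT) h5
      linarith only [h6]
    have hvw : (inner ℝ (v i T) w : ℝ) ≤ - (c i * (u T) ^ r * (u T * u T)) := by
      rw [real_inner_comm]; exact hwv
    -- the strict inequality
    have hAP : (A * P) ^ r = A ^ r * P ^ r := Real.mul_rpow hApos.le hPpos.le
    have hPr : P ^ r = (1 + T) ^ (-(β * r)) := by
      rw [hPdef, ← Real.rpow_mul hs₁pos.le]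
      ring_nf
    have hPrpos : 0 < P ^ r := Real.rpow_pos_of_pos hPpos r
    have hPrs : 1 ≤ P ^ r * (1 + T) := by
      have h8 : (1 + T) ^ (β * r) ≤ 1 + T := by
        have := Real.rpow_le_rpow_of_exponent_le hs₁ hβr.le
        rwa [Real.rpow_one] at this
      have h9 : (0:ℝ) < (1 + T) ^ (β * r) := Real.rpow_pos_of_pos hs₁pos _
      rw [hPr, Real.rpow_neg hs₁pos.le]
      calc (1:ℝ) ≤ (1 + T) / (1 + T) ^ (β * r) := (one_le_div h9).mpr h8
        _ = ((1 + T) ^ (β * r))⁻¹ * (1 + T) := by rw [div_eq_mul_inv, mul_comm]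
    have hkey2 : β / (1 + T) < c i * (A * P) ^ r := by
      rw [div_lt_iff₀ hs₁pos, hAP]
      have e1 : c i * (A ^ r * P ^ r) * (1 + T) = (c i * A ^ r) * (P ^ r * (1 + T)) := by
        ring
      have e2 : c i * A ^ r ≤ (c i * A ^ r) * (P ^ r * (1 + T)) :=
        le_mul_of_one_le_right (mul_pos (hc i) hArpos).le hPrs
      have e3 : c₀ * A ^ r ≤ c i * A ^ r :=
        mul_le_mul_of_nonneg_right (hc₀le i) hArpos.le
      have e4 : β < c₀ * A ^ r := by
        have h30 := mul_pos hc₀pos hArpos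
        have h31 : β ≤ c₀ / 2 * A ^ r := hβle
        linarith only [h30, h31]
      linarith only [e1.le, e1.ge, e2, e3, e4]
    -- assemble the contradiction
    have hexp : (1 + T) ^ (-β - 1) = P / (1 + T) := by
      rw [sub_eq_add_neg, Real.rpow_add hs₁pos, Real.rpow_neg_one, hPdef, div_eq_mul_inv]
    have hq : A * (-β * (1 + T) ^ (-β - 1)) * u T + u T * (A * (-β * (1 + T) ^ (-β - 1)))
        = -(2 * (β * A * (1 + T) ^ (-β - 1) * u T)) := by ring
    have hE : c i * (u T) ^ r * (u T * u T) ≤ β * A * (1 + T) ^ (-β - 1) * u T := by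
      linarith only [hvw, hwv, hDnn, hq.le, hq.ge]
    have hcontra : β * A * (1 + T) ^ (-β - 1) * u T < c i * (u T) ^ r * (u T * u T) := by
      rw [hexp, huT]
      have h10 := mul_lt_mul_of_pos_right hkey2
        (mul_pos (mul_pos hApos hPpos) (mul_pos hApos hPpos))
      calc β * A * (P / (1 + T)) * (A * P) = β / (1 + T) * (A * P * (A * P)) := by ring
        _ < c i * (A * P) ^ r * (A * P * (A * P)) := h10
        _ = c i * (A * P) ^ r * (A * P * (A * P)) := by ring
    linarith only [hE, hcontra]
  -- conclude
  intro i
  have hutend : Tendsto u atTop (nhds 0) := by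
    have h1 : Tendsto (fun t : ℝ => 1 + t) atTop atTop :=
      tendsto_atTop_add_const_left _ 1 tendsto_id
    have h2 : Tendsto (fun y : ℝ => y ^ (-β)) atTop (nhds 0) := tendsto_rpow_neg_atTop hβpos
    have h3 : Tendsto (fun t : ℝ => (1 + t) ^ (-β)) atTop (nhds 0) := h2.comp h1
    have h4 := h3.const_mul A
    rw [hudef]
    simpa using h4
  apply squeeze_zero_norm' _ hutend
  filter_upwards [eventually_ge_atTop (0:ℝ)] with t ht
  exact (key t ht i).le
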